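/- For γ ≥ 0, equality in the hockey-stick lower bound β = −γα + 1 − D_{f_γ}(P‖Q) is attained by the likelihood ratio test E with E ∩ {q>0} = {x : p(x)/q(x) > γ} and {q = 0} ⊆ E, i.e., with α = Q(p > γq) and β = P(p ≤ γq, q > 0). -/
import Mathlib


open MeasureTheory Set

/-- The likelihood ratio test with threshold `γ` attains equality in the hockey-stick bound:
with `α = Q(p > γq)` and `β = P(p ≤ γq, q > 0)`, `β = −γα + 1 − D_{f_γ}(P‖Q)`. -/
theorem stmt_13 {Ω : Type*} [MeasurableSpace Ω] (μ : Measure Ω)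
    (p q : Ω → ℝ) (hpm : Measurable p) (hqm : Measurable q)
    (hp0 : ∀ x, 0 ≤ p x) (hq0 : ∀ x, 0 ≤ q x)
    (hpi : Integrable p μ) (hqi : Integrable q μ)
    (hp1 : ∫ x, p x ∂μ = 1) (hq1 : ∫ x, q x ∂μ = 1)
    (γ : ℝ) (hγ : 0 ≤ γ) :
    (∫ x in {x | p x ≤ γ * q x ∧ 0 < q x}, p x ∂μ) =
      -γ * (∫ x in {x | γ * q x < p x}, q x ∂μ) + 1 -
        ∫ x, max (p x - γ * q x) 0 ∂μ := by
  set A : Set Ω := {x | γ * q x < p x} with hA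
  have hAmeas : MeasurableSet A := measurableSet_lt (hqm.const_mul γ) hpm
  -- Step 1: ∫ max = ∫_A p - γ ∫_A q
  have hmax : ∫ x, max (p x - γ * q x) 0 ∂μ
      = (∫ x in A, p x ∂μ) - γ * ∫ x in A, q x ∂μ := by
    have h1 : (fun x => max (p x - γ * q x) 0)
        = A.indicator (fun x => p x - γ * q x) := by
      funext x
      by_cases hx : x ∈ A
      · simp only [indicator_of_mem hx]
        exact max_eq_left (by simp only [hA, mem_setOf_eq] at hx; linarith)
      · simp only [indicator_of_notMem hx]
        exact max_eq_right (by simp only [hA, mem_setOf_eq, not_lt] at hx; linarith)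
    rw [h1, integral_indicator hAmeas, integral_sub (hpi.restrict)
      ((hqi.restrict).const_mul γ), integral_const_mul]
  -- Step 2: split total integral of p
  have hsplit : (∫ x in A, p x ∂μ) + (∫ x in Aᶜ, p x ∂μ) = 1 := by
    rw [integral_add_compl hAmeas hpi, hp1]
  -- Step 3: ∫_{Aᶜ} p = ∫_{target set} p
  have hcompl : (∫ x in Aᶜ, p x ∂μ)
      = ∫ x in {x | p x ≤ γ * q x ∧ 0 < q x}, p x ∂μ := by
    have hS : MeasurableSet {x | p x ≤ γ * q x ∧ 0 < q x} :=
      (measurableSet_le hpm (hqm.const_mul γ)).inter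
        (measurableSet_lt measurable_const hqm)
    rw [← integral_indicator hAmeas.compl, ← integral_indicator hS]
    congr 1
    funext x
    by_cases hx : x ∈ ({x | p x ≤ γ * q x ∧ 0 < q x} : Set Ω)
    · rw [indicator_of_mem hx, indicator_of_mem]
      simp only [hA, mem_compl_iff, mem_setOf_eq, not_lt]
      exact hx.1
    · rw [indicator_of_notMem hx]
      by_cases hx2 : x ∈ Aᶜ
      · rw [indicator_of_mem hx2]
        simp only [hA, mem_compl_iff, mem_setOf_eq, not_lt] at hx2
        simp only [mem_setOf_eq, not_and, not_lt] at hx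
        have hq : q x = 0 := le_antisymm (hx hx2) (hq0 x)
        have : p x ≤ 0 := by rw [hq] at hx2; linarith
        linarith [hp0 x]
      · rw [indicator_of_notMem hx2]
  rw [← hcompl, hmax]
  linarith
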